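/- Let ℓ ≥ s ≥ r ≥ 3 be integers. Then there exists an integer N such that for all n ≥ N, the maximum number of copies of K_s^{(r)} in an n-vertex r-graph that contains no member of the family 𝒦_{ℓ+1}^r as a subhypergraph equals N(K_s^{(r)}, T_r(n,ℓ)). -/

import Mathlib

open Finset

/-- A hypergraph (with vertices drawn from `ℕ`) given by its finite set of hyperedges. -/
abbrev HG : Type := Finset (Finset ℕ)

/-- The support (set of non-isolated vertices) of a hypergraph. -/
def hsupp (G : HG) : Finset ℕ := G.sup id

/-- `G` is `r`-uniform: every hyperedge has exactly `r` vertices. -/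
def Uniform (r : ℕ) (G : HG) : Prop := ∀ e ∈ G, e.card = r

/-- The image of a hypergraph under a relabelling of the vertices. -/
def emap (f : ℕ → ℕ) (G : HG) : HG := G.image (Finset.image f)

/-- `K` is an isomorphic copy of `H` (as hypergraphs; isolated vertices are irrelevant). -/
def IsCopy (H K : HG) : Prop :=
  ∃ f : ℕ → ℕ, Set.InjOn f ↑(hsupp H) ∧ emap f H = K

/-- `G` contains a subhypergraph isomorphic to `H`. -/
def Contains (G H : HG) : Prop := ∃ K, K ⊆ G ∧ IsCopy H K

/-- `N(H, G)`: the number of subhypergraphs of `G` isomorphic to `H`. -/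
noncomputable def copyCount (H G : HG) : ℕ :=
  Set.ncard {K : HG | K ⊆ G ∧ IsCopy H K}

/-- The generalized Turán number `ex_r(n, H, F)`: the maximum number of copies of `H`
in an `F`-free `r`-uniform hypergraph on `n` vertices. -/
noncomputable def exCount (r n : ℕ) (H F : HG) : ℕ :=
  sSup { m | ∃ G : HG, Uniform r G ∧ hsupp G ⊆ Finset.range n ∧
    ¬ Contains G F ∧ m = copyCount H G }

/-- The Turán number `ex_r(n, F)`: the maximum number of hyperedges in an `F`-free
`r`-uniform hypergraph on `n` vertices. -/
noncomputable def exTuran (r n : ℕ) (F : HG) : ℕ :=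
  sSup { m | ∃ G : HG, Uniform r G ∧ hsupp G ⊆ Finset.range n ∧
    ¬ Contains G F ∧ m = G.card }

/-- The complete `r`-graph `K_s^{(r)}` on `s` vertices. -/
def completeHG (r s : ℕ) : HG := Finset.powersetCard r (Finset.range s)

/-- The path `P_l` with `l` edges, as a 2-uniform hypergraph. -/
def pathG (l : ℕ) : HG := (Finset.range l).image (fun i => ({i, i+1} : Finset ℕ))

/-- The cycle `C_l` with `l` edges, as a 2-uniform hypergraph. -/
def cycleG (l : ℕ) : HG := (Finset.range l).image (fun i => ({i, (i+1) % l} : Finset ℕ))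

/-- The star `S_l = K_{1,l}` with `l` edges, as a 2-uniform hypergraph. -/
def starG (l : ℕ) : HG := (Finset.range l).image (fun i => ({0, i+1} : Finset ℕ))

/-- The `r`-expansion `F^r` of a graph `F`: insert `r - 2` new distinct vertices into each
edge of `F`, the new vertices being distinct across edges and disjoint from `V(F)`. -/
def expansion (r : ℕ) (F : HG) : HG :=
  F.image (fun e => e.image (fun v => Nat.pair 0 v) ∪
    (Finset.range (r-2)).image (fun j => Nat.pair 1 (Nat.pair (Encodable.encode e) j)))

/-- The vertex-disjoint union of the hypergraphs `H 0, …, H (k-1)`. -/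
def hIUnion (k : ℕ) (H : ℕ → HG) : HG :=
  (Finset.range k).biUnion (fun i => emap (fun v => Nat.pair i v) (H i))

/-- The vertex-disjoint union of two hypergraphs. -/
def hUnion (G H : HG) : HG := emap (fun v => 2*v) G ∪ emap (fun v => 2*v+1) H

/-- The strong chromatic number of a hypergraph (for a 2-uniform hypergraph this is
the usual chromatic number of the graph). -/
noncomputable def chromNum (G : HG) : ℕ :=
  sInf { k | ∃ c : ℕ → Fin k, ∀ e ∈ G, Set.InjOn c ↑e }

/-- The complete balanced `l`-partite `r`-graph `T_r(n, l)` on `n` vertices. -/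
def turanHG (r n l : ℕ) : HG :=
  (Finset.powersetCard r (Finset.range n)).filter
    (fun e => ∀ i ∈ e, ∀ j ∈ e, i % l = j % l → i = j)

/-- `S_{n,t}^r(n-t, l)`: take a set `U` of `t` vertices together with a disjoint copy of
`T_r(n-t, l)`, and add as hyperedges all `r`-sets meeting `U`. -/
def splitTuranHG (r n t l : ℕ) : HG :=
  (Finset.powersetCard r (Finset.range n)).filter
    (fun e => (∃ v ∈ e, v < t) ∨ ∀ i ∈ e, ∀ j ∈ e, (i - t) % l = (j - t) % l → i = j)

/-- `S_{n,t}^r`: the `n`-vertex `r`-graph of all `r`-sets meeting a fixed set of `t` vertices. -/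
def starHG (r n t : ℕ) : HG :=
  (Finset.powersetCard r (Finset.range n)).filter (fun e => ∃ v ∈ e, v < t)

/-- `F` is a member of the family `𝒦_t^r`. -/
def memFamilyK (r t : ℕ) (F : HG) : Prop :=
  Uniform r F ∧ F.card ≤ Nat.choose t 2 ∧
    ∃ S : Finset ℕ, S.card = t ∧ ∀ u ∈ S, ∀ v ∈ S, u ≠ v → ∃ e ∈ F, u ∈ e ∧ v ∈ e

/-- The maximum number of copies of `H` in an `n`-vertex `r`-graph containing no member
of the family described by the predicate `P` as a subhypergraph. -/
noncomputable def exCountFam (r n : ℕ) (H : HG) (P : HG → Prop) : ℕ :=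
  sSup { m | ∃ G : HG, Uniform r G ∧ hsupp G ⊆ Finset.range n ∧
    (∀ F : HG, P F → ¬ Contains G F) ∧ m = copyCount H G }

/-- `G` contains a Berge copy of `F`. -/
def ContainsBerge (G F : HG) : Prop :=
  ∃ f : ℕ → ℕ, Set.InjOn f ↑(hsupp F) ∧
    ∃ φ : {e : Finset ℕ // e ∈ F} → {e : Finset ℕ // e ∈ G},
      Function.Injective φ ∧ ∀ e : {e : Finset ℕ // e ∈ F}, e.1.image f ⊆ (φ e).1

/-- `ex_s(n, Berge-F)`: the maximum number of hyperedges in an `n`-vertex `s`-graph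
containing no Berge copy of `F`. -/
noncomputable def exBerge (s n : ℕ) (F : HG) : ℕ :=
  sSup { m | ∃ G : HG, Uniform s G ∧ hsupp G ⊆ Finset.range n ∧
    ¬ ContainsBerge G F ∧ m = G.card }




namespace StmtAux
open Multiset

def esym (m : Multiset ℕ) (k : ℕ) : ℕ := ((m.powersetCard k).map Multiset.prod).sum

@[simp] lemma esym_zero (m : Multiset ℕ) : esym m 0 = 1 := by
  simp [esym]

@[simp] lemma esym_nil (k : ℕ) : esym (0 : Multiset ℕ) (k+1) = 0 := by
  simp [esym, Multiset.powersetCard_zero_right]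

lemma esym_cons (a : ℕ) (m : Multiset ℕ) (k : ℕ) :
    esym (a ::ₘ m) (k+1) = esym m (k+1) + a * esym m k := by
  simp [esym, Multiset.powersetCard_cons, Multiset.map_map, Function.comp,
    Multiset.sum_map_mul_left]

end StmtAux

namespace StmtAux
open Multiset

lemma esym_one (m : Multiset ℕ) : esym m 1 = m.sum := by
  induction m using Multiset.induction with
  | empty => simp
  | cons a m ih => rw [show (1:ℕ) = 0 + 1 from rfl] at *; rw [esym_cons]; simp [ih]; omega

lemma esym_cons_cons (a b : ℕ) (m : Multiset ℕ) (k : ℕ) :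
    esym (a ::ₘ b ::ₘ m) (k+2) =
      esym m (k+2) + (a+b) * esym m (k+1) + a * b * esym m k := by
  rw [esym_cons, esym_cons, esym_cons]
  ring

lemma esym_exchange (a b a' b' : ℕ) (m : Multiset ℕ) (k : ℕ)
    (h1 : a + b = a' + b') (h2 : a * b ≤ a' * b') :
    esym (a ::ₘ b ::ₘ m) k ≤ esym (a' ::ₘ b' ::ₘ m) k := by
  match k with
  | 0 => simp
  | 1 => rw [esym_one, esym_one]; simp [← add_assoc, h1]
  | (k+2) =>
    rw [esym_cons_cons, esym_cons_cons, h1]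
    have := Nat.mul_le_mul_right (esym m k) h2
    omega

end StmtAux

namespace StmtAux
open Multiset

def balParts (n l : ℕ) : Multiset ℕ :=
  Multiset.replicate (n % l) (n / l + 1) + Multiset.replicate (l - n % l) (n / l)

def tf (s n l : ℕ) : ℕ := esym (balParts n l) s

lemma balParts_card {n l : ℕ} (h : 0 < l) : Multiset.card (balParts n l) = l := by
  have := Nat.mod_lt n h
  simp [balParts]; omega

lemma balParts_sum {n l : ℕ} (h : 0 < l) : (balParts n l).sum = n := by
  have h1 := Nat.mod_lt n h
  have h2 := Nat.div_add_mod n l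
  simp only [balParts, Multiset.sum_add, Multiset.sum_replicate, smul_eq_mul]
  have e1 : n % l * (n / l + 1) = n % l * (n / l) + n % l := by ring
  have e2 : (l - n % l) * (n / l) = l * (n / l) - n % l * (n / l) :=
    Nat.sub_mul _ _ _
  have e3 : n % l * (n / l) ≤ l * (n / l) :=
    Nat.mul_le_mul_right _ (le_of_lt h1)
  omega

/-- a balanced multiset with given card and sum is the balanced partition -/
lemma balanced_eq {m : Multiset ℕ} (hbal : ∀ a ∈ m, ∀ b ∈ m, a ≤ b + 1) :
    m = balParts m.sum m.card := by
  rcases (Multiset.empty_or_exists_mem m) with rfl | ⟨x, hx⟩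
  · simp [balParts]
  · obtain ⟨mu, hmu_mem, hmu_min⟩ : ∃ mu ∈ m, ∀ a ∈ m, mu ≤ a := by
      have hne : m.toFinset.Nonempty := ⟨x, Multiset.mem_toFinset.2 hx⟩
      refine ⟨m.toFinset.min' hne, Multiset.mem_toFinset.1 (m.toFinset.min'_mem hne), ?_⟩
      exact fun a ha => m.toFinset.min'_le a (Multiset.mem_toFinset.2 ha)
    have hval : ∀ a ∈ m, a = mu ∨ a = mu + 1 := by
      intro a ha
      have h1 := hmu_min a ha
      have h2 := hbal a ha mu hmu_mem
      omega
    set l := Multiset.card m with hl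
    set k := m.count (mu+1) with hk
    have hkl : k ≤ l := Multiset.count_le_card _ _
    have hsplit : m = Multiset.replicate k (mu+1) + Multiset.replicate (l - k) mu := by
      have h1 : m.filter (fun a => mu + 1 = a) = Multiset.replicate k (mu+1) := by
        exact Multiset.filter_eq m (mu+1)
      have h2 : m.filter (fun a => ¬ (mu + 1 = a)) = Multiset.replicate (l - k) mu := by
        rw [Multiset.eq_replicate]
        constructor
        · have := congrArg Multiset.card (Multiset.filter_add_not (fun a => mu + 1 = a) m)
          rw [Multiset.card_add] at this
          have hc1 : Multiset.card (m.filter (fun a => mu + 1 = a)) = k := by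
            rw [h1, Multiset.card_replicate]
          omega
        · intro b hb
          rw [Multiset.mem_filter] at hb
          rcases hval b hb.1 with h | h
          · exact h
          · exact absurd h.symm hb.2
      calc m = m.filter (fun a => mu + 1 = a) + m.filter (fun a => ¬ (mu + 1 = a)) :=
              (Multiset.filter_add_not _ m).symm
        _ = _ := by rw [h1, h2]
    have hsum : m.sum = l * mu + k := by
      rw [hsplit]
      simp [Multiset.sum_replicate, Nat.mul_succ]
      have : (l - k) * mu = l * mu - k * mu := Nat.sub_mul _ _ _
      have : k * mu ≤ l * mu := Nat.mul_le_mul_right _ hkl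
      have e1 : k * (mu+1) = k * mu + k := by ring
      omega
    rcases lt_or_eq_of_le hkl with hlt | heq
    · have hmod : m.sum % l = k := by rw [hsum, Nat.mul_comm, Nat.mul_add_mod' mu l k, Nat.mod_eq_of_lt hlt]
      have hdiv : m.sum / l = mu := by
        rw [hsum, Nat.mul_add_div (by omega : 0 < l), Nat.div_eq_of_lt hlt, add_zero]
      rw [balParts, hmod, hdiv, hsplit]
    · have h0 : m.sum = (mu + 1) * l := by rw [hsum, ← heq]; ring
      have hl0 : 0 < l := by
        by_contra h
        have : l = 0 := by omega
        rw [hl] at this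
        rw [Multiset.card_eq_zero] at this
        subst this
        simp at hx
      have hmod : m.sum % l = 0 := by rw [h0]; simp
      have hdiv : m.sum / l = mu + 1 := by rw [h0]; exact Nat.mul_div_cancel _ hl0
      rw [balParts, hmod, hdiv, hsplit, ← heq]
      simp
end StmtAux

namespace StmtAux
open Multiset

lemma L1 (s : ℕ) (m : Multiset ℕ) : esym m s ≤ tf s m.sum m.card := by
  generalize hN : (m.map (fun x => x*x)).sum = N
  induction N using Nat.strong_induction_on generalizing m with
  | _ N ih =>
  by_cases hbal : ∀ a ∈ m, ∀ b ∈ m, a ≤ b + 1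
  · have h := balanced_eq hbal
    conv_lhs => rw [h]
    exact le_refl _
  · push_neg at hbal
    obtain ⟨a, ha, b, hb, hab⟩ := hbal
    have hba : b + 1 < a := by omega
    have hbne : b ≠ a := by omega
    have hbmem : b ∈ m.erase a := (Multiset.mem_erase_of_ne hbne).2 hb
    set rest := (m.erase a).erase b with hrest
    have hm : m = a ::ₘ b ::ₘ rest := by
      rw [hrest, Multiset.cons_erase hbmem, Multiset.cons_erase ha]
    obtain ⟨d, hd⟩ : ∃ d, a = b + 2 + d := ⟨a - b - 2, by omega⟩
    have ha1 : a - 1 = b + 1 + d := by omega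
    set m' : Multiset ℕ := (a-1) ::ₘ (b+1) ::ₘ rest with hm'
    have hsum : m'.sum = m.sum := by rw [hm, hm']; simp; omega
    have hcard : Multiset.card m' = Multiset.card m := by rw [hm, hm']; simp
    have hmeas : (m'.map (fun x => x*x)).sum < N := by
      rw [← hN, hm, hm']
      simp only [Multiset.map_cons, Multiset.sum_cons]
      have : (a-1)*(a-1) + (b+1)*(b+1) < a*a + b*b := by
        rw [ha1, hd]; nlinarith
      omega
    have step : esym m s ≤ esym m' s := by
      rw [hm, hm']
      exact esym_exchange a b (a-1) (b+1) rest s (by omega)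
        (by rw [ha1, hd]; nlinarith)
    calc esym m s ≤ esym m' s := step
      _ ≤ tf s m'.sum (Multiset.card m') := ih _ hmeas m' rfl
      _ = tf s m.sum (Multiset.card m) := by rw [hsum, hcard]

end StmtAux

namespace StmtAux
open Finset

lemma tf_step (s n b l : ℕ) (hb : b ≤ n) (hl : 0 < l) :
    tf (s+1) b l + (n - b) * tf s b l ≤ tf (s+1) n (l+1) := by
  have h1 : tf (s+1) b l + (n - b) * tf s b l
      = esym ((n-b) ::ₘ balParts b l) (s+1) := by
    rw [esym_cons]; rfl
  rw [h1]
  have h2 := L1 (s+1) ((n-b) ::ₘ balParts b l)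
  have hsum : ((n-b) ::ₘ balParts b l).sum = n := by
    rw [Multiset.sum_cons, balParts_sum hl]; omega
  have hcard : Multiset.card ((n-b) ::ₘ balParts b l) = l + 1 := by
    rw [Multiset.card_cons, balParts_card hl]
  rw [hsum, hcard] at h2
  exact h2

variable (A : ℕ → ℕ → Prop) [DecidableRel A]

def cliqueSetA (s : ℕ) (V : Finset ℕ) : Finset (Finset ℕ) :=
  (V.powersetCard s).filter (fun T => ∀ u ∈ T, ∀ v ∈ T, u ≠ v → A u v)

lemma cliqueSetA_empty (s : ℕ) : cliqueSetA A (s+1) (∅ : Finset ℕ) = ∅ := by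
  rw [Finset.eq_empty_iff_forall_notMem]
  intro T hT
  simp only [cliqueSetA, Finset.mem_filter, Finset.mem_powersetCard] at hT
  have h0 := Finset.subset_empty.1 hT.1.1
  subst h0
  simp at hT

lemma zykov (hsym : ∀ u v, A u v → A v u) :
    ∀ l : ℕ, ∀ V : Finset ℕ,
      (∀ S, S ⊆ V → S.card = l + 1 → ¬ (∀ u ∈ S, ∀ v ∈ S, u ≠ v → A u v)) →
      ∀ s : ℕ, (cliqueSetA A s V).card ≤ tf s V.card l := by
  intro l
  induction l with
  | zero =>
    intro V hfree s
    have hV : V = ∅ := by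
      by_contra h
      obtain ⟨x, hx⟩ := Finset.nonempty_iff_ne_empty.2 h
      exact hfree {x} (by simpa using hx) (by simp)
        (by intro u hu v hv huv; simp at hu hv; omega)
    subst hV
    match s with
    | 0 =>
      refine le_trans (Finset.card_filter_le _ _) ?_
      simp [tf, balParts, esym]
    | (s+1) =>
      rw [cliqueSetA_empty]
      simp
  | succ l ihl =>
    intro V hfree s
    match s with
    | 0 =>
      have h1 : (cliqueSetA A 0 V).card ≤ 1 := by
        apply le_trans (Finset.card_filter_le _ _)
        simp
      simpa [tf] using h1
    | (s+1) =>
      rcases Finset.eq_empty_or_nonempty V with rfl | hVne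
      · rw [cliqueSetA_empty]; simp
      · set g : ℕ → ℕ := fun u => (cliqueSetA A s ((V.erase u).filter (A u))).card with hg
        obtain ⟨v, hvV, hvmax⟩ := Finset.exists_max_image V g hVne
        set B : Finset ℕ := (V.erase v).filter (A v) with hB
        have hBV : B ⊆ V := (Finset.filter_subset _ _).trans (Finset.erase_subset _ _)
        have hvB : v ∉ B := by
          intro h
          exact (Finset.notMem_erase v V) (Finset.mem_of_mem_filter v h)
        have hBfree : ∀ S, S ⊆ B → S.card = l + 1 → ¬ (∀ u ∈ S, ∀ v ∈ S, u ≠ v → A u v) := by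
          intro S hSB hScard hpair
          apply hfree (insert v S) ?_ ?_ ?_
          · intro x hx
            rcases Finset.mem_insert.1 hx with rfl | hx
            · exact hvV
            · exact hBV (hSB hx)
          · rw [Finset.card_insert_of_notMem (fun h => hvB (hSB h)), hScard]
          · intro x hx y hy hxy
            rcases Finset.mem_insert.1 hx with hxv | hx'
            · rcases Finset.mem_insert.1 hy with hyv | hy'
              · exact absurd (hxv.trans hyv.symm) hxy
              · subst hxv; exact (Finset.mem_filter.1 (hSB hy')).2
            · rcases Finset.mem_insert.1 hy with hyv | hy'
              · subst hyv; exact hsym _ _ (Finset.mem_filter.1 (hSB hx')).2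
              · exact hpair x hx' y hy' hxy
        have hdecomp : cliqueSetA A (s+1) V ⊆
            cliqueSetA A (s+1) B ∪
              (V \ B).biUnion (fun w => (cliqueSetA A (s+1) V).filter (fun T => w ∈ T)) := by
          intro T hT
          have hT' := hT
          simp only [cliqueSetA, Finset.mem_filter, Finset.mem_powersetCard] at hT'
          by_cases hTB : T ⊆ B
          · apply Finset.mem_union_left
            simp only [cliqueSetA, Finset.mem_filter, Finset.mem_powersetCard]
            exact ⟨⟨hTB, hT'.1.2⟩, hT'.2⟩
          · apply Finset.mem_union_right
            obtain ⟨w, hwT, hwB⟩ := Finset.not_subset.1 hTB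
            rw [Finset.mem_biUnion]
            exact ⟨w, Finset.mem_sdiff.2 ⟨hT'.1.1 hwT, hwB⟩, Finset.mem_filter.2 ⟨hT, hwT⟩⟩
        have hdeg : ∀ w ∈ V, ((cliqueSetA A (s+1) V).filter (fun T => w ∈ T)).card ≤ g w := by
          intro w hwV
          apply Finset.card_le_card_of_injOn (fun T => T.erase w)
          · intro T hT
            have hwT : w ∈ T := (Finset.mem_filter.1 hT).2
            have hT1 := (Finset.mem_filter.1 hT).1
            simp only [cliqueSetA, Finset.mem_coe, Finset.mem_filter, Finset.mem_powersetCard] at hT1 ⊢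
            refine ⟨⟨?_, ?_⟩, ?_⟩
            · intro x hx
              rw [Finset.mem_erase] at hx
              rw [Finset.mem_filter, Finset.mem_erase]
              exact ⟨⟨hx.1, hT1.1.1 hx.2⟩, hT1.2 w hwT x hx.2 (Ne.symm hx.1)⟩
            · rw [Finset.card_erase_of_mem hwT, hT1.1.2]
              omega
            · intro x hx y hy hxy
              rw [Finset.mem_erase] at hx hy
              exact hT1.2 x hx.2 y hy.2 hxy
          · intro T1 hT1 T2 hT2 h
            have hw1 : w ∈ T1 := (Finset.mem_filter.1 (Finset.mem_coe.1 hT1)).2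
            have hw2 : w ∈ T2 := (Finset.mem_filter.1 (Finset.mem_coe.1 hT2)).2
            rw [← Finset.insert_erase hw1, ← Finset.insert_erase hw2]
            simp only at h
            rw [h]
        have hcard : (cliqueSetA A (s+1) V).card ≤
            (cliqueSetA A (s+1) B).card + (V \ B).card * g v := by
          calc (cliqueSetA A (s+1) V).card
              ≤ _ := Finset.card_le_card hdecomp
            _ ≤ (cliqueSetA A (s+1) B).card +
                ((V \ B).biUnion (fun w => (cliqueSetA A (s+1) V).filter (fun T => w ∈ T))).card :=
                Finset.card_union_le _ _
            _ ≤ (cliqueSetA A (s+1) B).card +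
                ∑ w ∈ V \ B, ((cliqueSetA A (s+1) V).filter (fun T => w ∈ T)).card := by
                gcongr
                exact Finset.card_biUnion_le
            _ ≤ (cliqueSetA A (s+1) B).card + ∑ w ∈ V \ B, g v := by
                gcongr with w hw
                have hwV : w ∈ V := (Finset.mem_sdiff.1 hw).1
                exact le_trans (hdeg w hwV) (hvmax w hwV)
            _ = (cliqueSetA A (s+1) B).card + (V \ B).card * g v := by
                rw [Finset.sum_const, smul_eq_mul]
        have hVB : (V \ B).card = V.card - B.card := Finset.card_sdiff_of_subset hBV
        have hBle : B.card ≤ V.card := Finset.card_le_card hBV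
        have ih1 : (cliqueSetA A (s+1) B).card ≤ tf (s+1) B.card l := ihl B hBfree (s+1)
        have ih2 : g v ≤ tf s B.card l := ihl B hBfree s
        rcases Nat.eq_zero_or_pos l with rfl | hl
        · -- l = 0 : B is K_1-free hence empty, so cliques through anything...
          have hBempty : B = ∅ := by
            by_contra h
            obtain ⟨x, hx⟩ := Finset.nonempty_iff_ne_empty.2 h
            exact hBfree {x} (by simpa using hx) (by simp)
              (by intro u hu v' hv' huv; simp at hu hv'; omega)
          -- every clique has card ≤ 1 vertex? directly: s+1 cliques are subsets... use hcard
          calc (cliqueSetA A (s+1) V).card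
              ≤ (cliqueSetA A (s+1) B).card + (V \ B).card * g v := hcard
            _ ≤ tf (s+1) B.card 0 + (V.card - B.card) * tf s B.card 0 := by
                rw [hVB]; gcongr
            _ = tf (s+1) 0 0 + (V.card - 0) * tf s 0 0 := by rw [hBempty]; simp
            _ ≤ tf (s+1) V.card 1 := by
                match s with
                | 0 =>
                  have hL : tf (0+1) 0 0 = 0 := by simp [tf, balParts]
                  have hL2 : tf 0 0 0 = 1 := by simp [tf]
                  have hR : tf (0+1) (V.card) 1 = V.card := by
                    rw [tf, esym_one, balParts_sum one_pos]
                  rw [hL, hL2, hR]; omega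
                | (s'+1) =>
                  have hL : tf (s'+1+1) 0 0 = 0 := by simp [tf, balParts]
                  have hL2 : tf (s'+1) 0 0 = 0 := by simp [tf, balParts]
                  rw [hL, hL2]; simp
        · calc (cliqueSetA A (s+1) V).card
              ≤ (cliqueSetA A (s+1) B).card + (V \ B).card * g v := hcard
            _ ≤ tf (s+1) B.card l + (V.card - B.card) * tf s B.card l := by
                rw [hVB]; gcongr
            _ ≤ tf (s+1) V.card (l+1) := tf_step s V.card B.card l hBle hl

end StmtAux

namespace StmtAux
open Finset

lemma rainbow_split (g : ℕ → ℕ) (i : ℕ) (V : Finset ℕ) (s : ℕ) :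
    ((V.powersetCard (s+1)).filter (fun T => ∀ x ∈ T, ∀ y ∈ T, g x = g y → x = y)).card
    = (((V.filter (fun x => g x ≠ i)).powersetCard (s+1)).filter
        (fun T => ∀ x ∈ T, ∀ y ∈ T, g x = g y → x = y)).card
      + (V.filter (fun x => g x = i)).card *
        (((V.filter (fun x => g x ≠ i)).powersetCard s).filter
          (fun T => ∀ x ∈ T, ∀ y ∈ T, g x = g y → x = y)).card := by
  classical
  set V' : Finset ℕ := V.filter (fun x => g x ≠ i) with hV'
  set Vi : Finset ℕ := V.filter (fun x => g x = i) with hVi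
  set R : ℕ → Finset ℕ → Finset (Finset ℕ) :=
    fun k W => (W.powersetCard k).filter (fun T => ∀ x ∈ T, ∀ y ∈ T, g x = g y → x = y) with hR
  show (R (s+1) V).card = (R (s+1) V').card + Vi.card * (R s V').card
  have hsplit : (R (s+1) V).card =
      ((R (s+1) V).filter (fun T => ∀ x ∈ T, g x ≠ i)).card +
      ((R (s+1) V).filter (fun T => ¬ ∀ x ∈ T, g x ≠ i)).card :=
    (Finset.card_filter_add_card_filter_not _).symm
  have hA1 : (R (s+1) V).filter (fun T => ∀ x ∈ T, g x ≠ i) = R (s+1) V' := by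
    ext T
    simp only [hR, Finset.mem_filter, Finset.mem_powersetCard]
    constructor
    · rintro ⟨⟨⟨hTV, hTc⟩, hrb⟩, hni⟩
      refine ⟨⟨fun x hx => ?_, hTc⟩, hrb⟩
      rw [hV', Finset.mem_filter]
      exact ⟨hTV hx, hni x hx⟩
    · rintro ⟨⟨hTV, hTc⟩, hrb⟩
      refine ⟨⟨⟨fun x hx => (Finset.mem_filter.1 (hTV hx)).1, hTc⟩, hrb⟩, ?_⟩
      intro x hx
      exact (Finset.mem_filter.1 (hTV hx)).2
  have hA2 : ((R (s+1) V).filter (fun T => ¬ ∀ x ∈ T, g x ≠ i)).card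
      = (Vi ×ˢ R s V').card := by
    symm
    apply Finset.card_bij (fun p _ => insert p.1 p.2)
    · -- maps to
      rintro ⟨x, T'⟩ hp
      rw [Finset.mem_product] at hp
      obtain ⟨hx, hT'⟩ := hp
      rw [hVi, Finset.mem_filter] at hx
      simp only [hR, Finset.mem_filter, Finset.mem_powersetCard] at hT' ⊢
      obtain ⟨⟨hT'V, hT'c⟩, hrb⟩ := hT'
      have hgne : ∀ y ∈ T', g y ≠ i := by
        intro y hy
        exact (Finset.mem_filter.1 (hT'V hy)).2
      have hxT' : x ∉ T' := fun h => (hgne x h) hx.2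
      refine ⟨⟨⟨?_, ?_⟩, ?_⟩, ?_⟩
      · intro y hy
        rcases Finset.mem_insert.1 hy with rfl | hy
        · exact hx.1
        · exact (Finset.mem_filter.1 (hT'V hy)).1
      · rw [Finset.card_insert_of_notMem hxT', hT'c]
      · intro a ha b hb hab
        rcases Finset.mem_insert.1 ha with rfl | ha' <;>
          rcases Finset.mem_insert.1 hb with h | hb'
        · rw [h]
        · exact absurd hab.symm (by rw [hx.2]; exact (hgne b hb'))
        · subst h
          exact absurd (hab.trans hx.2) (hgne a ha')
        · exact hrb a ha' b hb' hab
      · intro hall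
        exact (hall x (Finset.mem_insert_self _ _)) hx.2
    · -- injective
      rintro ⟨x1, T1⟩ hp1 ⟨x2, T2⟩ hp2 heq
      rw [Finset.mem_product] at hp1 hp2
      obtain ⟨hx1, hT1⟩ := hp1
      obtain ⟨hx2, hT2⟩ := hp2
      rw [hVi, Finset.mem_filter] at hx1 hx2
      simp only at heq
      have hg1 : ∀ y ∈ T1, g y ≠ i := by
        intro y hy
        have := (Finset.mem_filter.1 ((Finset.mem_powersetCard.1
          (Finset.mem_filter.1 hT1).1).1 hy)).2
        exact this
      have hg2 : ∀ y ∈ T2, g y ≠ i := by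
        intro y hy
        exact (Finset.mem_filter.1 ((Finset.mem_powersetCard.1
          (Finset.mem_filter.1 hT2).1).1 hy)).2
      have hx12 : x1 = x2 := by
        have : x1 ∈ insert x2 T2 := by rw [← heq]; exact Finset.mem_insert_self _ _
        rcases Finset.mem_insert.1 this with h | h
        · exact h
        · exact absurd hx1.2 (hg2 x1 h)
      subst hx12
      have hxT1 : x1 ∉ T1 := fun h => (hg1 x1 h) hx1.2
      have hxT2 : x1 ∉ T2 := fun h => (hg2 x1 h) hx2.2
      have : (insert x1 T1).erase x1 = (insert x1 T2).erase x1 := by rw [heq]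
      rw [Finset.erase_insert hxT1, Finset.erase_insert hxT2] at this
      rw [Prod.mk.injEq]
      exact ⟨rfl, this⟩
    · -- surjective
      intro T hT
      rw [Finset.mem_filter] at hT
      obtain ⟨hT1, hT2⟩ := hT
      push_neg at hT2
      obtain ⟨x, hxT, hgx⟩ := hT2
      simp only [hR, Finset.mem_filter, Finset.mem_powersetCard] at hT1
      obtain ⟨⟨hTV, hTc⟩, hrb⟩ := hT1
      refine ⟨⟨x, T.erase x⟩, ?_, ?_⟩
      · rw [Finset.mem_product]
        constructor
        · rw [hVi, Finset.mem_filter]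
          exact ⟨hTV hxT, hgx⟩
        · simp only [hR, Finset.mem_filter, Finset.mem_powersetCard]
          refine ⟨⟨?_, ?_⟩, ?_⟩
          · intro y hy
            rw [Finset.mem_erase] at hy
            rw [hV', Finset.mem_filter]
            refine ⟨hTV hy.2, ?_⟩
            intro hgy
            exact hy.1 (hrb y hy.2 x hxT (by rw [hgy, hgx]))
          · rw [Finset.card_erase_of_mem hxT, hTc]
            omega
          · intro a ha b hb hab
            rw [Finset.mem_erase] at ha hb
            exact hrb a ha.2 b hb.2 hab
      · simp only
        rw [Finset.insert_erase hxT]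
  rw [hsplit, hA1, hA2, Finset.card_product]

end StmtAux

namespace StmtAux
open Finset

lemma rainbow_count (g : ℕ → ℕ) (J : Finset ℕ) : ∀ (V : Finset ℕ), (∀ x ∈ V, g x ∈ J) → ∀ s : ℕ,
    ((V.powersetCard s).filter (fun T => ∀ x ∈ T, ∀ y ∈ T, g x = g y → x = y)).card
      = esym (J.val.map (fun i => (V.filter (fun x => g x = i)).card)) s := by
  induction J using Finset.induction_on with
  | empty =>
    intro V hV s
    have hV0 : V = ∅ := by
      rcases Finset.eq_empty_or_nonempty V with h | ⟨x, hx⟩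
      · exact h
      · exact absurd (hV x hx) (Finset.notMem_empty _)
    subst hV0
    match s with
    | 0 =>
      rw [show ((∅ : Finset ℕ).powersetCard 0) = {∅} by simp]
      rw [Finset.filter_singleton, if_pos (by intro x hx; simp at hx)]
      simp [esym]
    | (s+1) =>
      rw [show ((∅ : Finset ℕ).powersetCard (s+1)) = ∅ by
        rw [Finset.eq_empty_iff_forall_notMem]
        intro T hT
        rw [Finset.mem_powersetCard] at hT
        have := Finset.subset_empty.1 hT.1
        subst this
        simp at hT]
      simp [esym, Multiset.powersetCard_zero_right]
  | @insert i J' hi ih =>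
    intro V hV s
    set V' : Finset ℕ := V.filter (fun x => g x ≠ i) with hV'
    have hV'J : ∀ x ∈ V', g x ∈ J' := by
      intro x hx
      rw [hV', Finset.mem_filter] at hx
      rcases Finset.mem_insert.1 (hV x hx.1) with h | h
      · exact absurd h hx.2
      · exact h
    have hweights : J'.val.map (fun j => (V'.filter (fun x => g x = j)).card)
        = J'.val.map (fun j => (V.filter (fun x => g x = j)).card) := by
      apply Multiset.map_congr rfl
      intro j hj
      congr 1
      ext x
      simp only [hV', Finset.mem_filter]
      constructor
      · rintro ⟨⟨h1, _⟩, h3⟩; exact ⟨h1, h3⟩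
      · rintro ⟨h1, h2⟩
        refine ⟨⟨h1, ?_⟩, h2⟩
        rw [h2]
        intro h
        subst h
        exact hi hj
    have hmult : (insert i J').val.map (fun j => (V.filter (fun x => g x = j)).card)
        = ((V.filter (fun x => g x = i)).card) ::ₘ
            J'.val.map (fun j => (V.filter (fun x => g x = j)).card) := by
      rw [Finset.insert_val_of_notMem hi, Multiset.map_cons]
    match s with
    | 0 =>
      rw [show (V.powersetCard 0) = {∅} by simp]
      rw [Finset.filter_singleton, if_pos (by intro x hx; simp at hx)]
      simp [esym]
    | (s+1) =>
      rw [hmult, esym_cons, ← hweights, ← ih V' hV'J (s+1), ← ih V' hV'J s]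
      exact rainbow_split g i V s

end StmtAux

namespace StmtAux
open Finset

lemma fiber_card (n l i : ℕ) (hl : 0 < l) (hi : i < l) :
    (((Finset.range n).filter (fun x => x % l = i))).card
      = if i < n % l then n / l + 1 else n / l := by
  rw [show ((Finset.range n).filter (fun x => x % l = i))
      = (Finset.range (if i < n % l then n / l + 1 else n / l)).image (fun j => l * j + i) from ?_]
  · rw [Finset.card_image_of_injective _ (fun a b hab =>
      Nat.eq_of_mul_eq_mul_left hl (by omega : l * a = l * b))]
    exact Finset.card_range _
  · ext x
    rw [Finset.mem_filter, Finset.mem_range, Finset.mem_image]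
    constructor
    · rintro ⟨hxn, hxi⟩
      refine ⟨x / l, ?_, by
        have := Nat.div_add_mod x l
        omega⟩
      rw [Finset.mem_range]
      have hdm : l * (x / l) + x % l = x := Nat.div_add_mod x l
      have hdm2 : l * (n / l) + n % l = n := Nat.div_add_mod n l
      have hml : n % l < l := Nat.mod_lt _ hl
      by_cases h : i < n % l
      · rw [if_pos h]
        by_contra hcon
        push_neg at hcon
        have h1 : l * (n / l + 1) ≤ l * (x / l) := Nat.mul_le_mul_left _ hcon
        have h2 : l * (n / l + 1) = l * (n / l) + l := by ring
        omega
      · rw [if_neg h]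
        by_contra hcon
        push_neg at hcon
        have h1 : l * (n / l) ≤ l * (x / l) := Nat.mul_le_mul_left _ hcon
        omega
    · rintro ⟨j, hj, rfl⟩
      rw [Finset.mem_range] at hj
      have hmod : (l * j + i) % l = i := by
        rw [Nat.add_comm, Nat.mul_comm, Nat.add_mul_mod_self_right, Nat.mod_eq_of_lt hi]
      refine ⟨?_, hmod⟩
      have hdm2 : l * (n / l) + n % l = n := Nat.div_add_mod n l
      have hml : n % l < l := Nat.mod_lt _ hl
      by_cases h : i < n % l
      · rw [if_pos h] at hj
        have h1 : l * j ≤ l * (n / l) := Nat.mul_le_mul_left _ (by omega)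
        omega
      · rw [if_neg h] at hj
        have h1 : l * (j + 1) ≤ l * (n / l) := Nat.mul_le_mul_left _ (by omega)
        have h2 : l * (j + 1) = l * j + l := by ring
        omega

lemma fibers_eq_balParts (n l : ℕ) (hl : 0 < l) :
    (Finset.range l).val.map (fun i => (((Finset.range n).filter (fun x => x % l = i))).card)
      = balParts n l := by
  set M := (Finset.range l).val.map
    (fun i => (((Finset.range n).filter (fun x => x % l = i))).card) with hM
  have hcard : Multiset.card M = l := by simp [hM]
  have hsum : M.sum = n := by
    have h := Finset.card_eq_sum_card_fiberwise
      (f := fun x => x % l) (s := Finset.range n) (t := Finset.range l)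
      (fun x _ => Finset.mem_range.2 (Nat.mod_lt _ hl))
    rw [Finset.card_range] at h
    exact h.symm
  have hbal : ∀ a ∈ M, ∀ b ∈ M, a ≤ b + 1 := by
    intro a ha b hb
    rw [hM, Multiset.mem_map] at ha hb
    obtain ⟨ia, hia, rfl⟩ := ha
    obtain ⟨ib, hib, rfl⟩ := hb
    rw [← Finset.mem_def, Finset.mem_range] at hia hib
    have h1 := fiber_card n l ia hl hia
    have h2 := fiber_card n l ib hl hib
    rw [h1, h2]
    split <;> split <;> omega
  have := balanced_eq hbal
  rw [hsum, hcard] at this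
  exact this

end StmtAux


namespace StmtAux

lemma mem_hsupp {G : HG} {u : ℕ} : u ∈ hsupp G ↔ ∃ e ∈ G, u ∈ e := by
  simp [hsupp, Finset.mem_sup]

lemma hsupp_mono {G K : HG} (h : K ⊆ G) : hsupp K ⊆ hsupp G := by
  intro u hu
  rw [mem_hsupp] at hu ⊢
  obtain ⟨e, he, hue⟩ := hu
  exact ⟨e, h he, hue⟩

lemma hsupp_complete {r s : ℕ} (hr : 1 ≤ r) (hrs : r ≤ s) :
    hsupp (completeHG r s) = Finset.range s := by
  apply Finset.Subset.antisymm
  · intro x hx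
    rw [mem_hsupp] at hx
    obtain ⟨e, he, hxe⟩ := hx
    rw [completeHG, Finset.mem_powersetCard] at he
    exact he.1 hxe
  · intro x hx
    rw [mem_hsupp]
    obtain ⟨t, h1, h2, h3⟩ := Finset.exists_subsuperset_card_eq
      (Finset.singleton_subset_iff.2 hx) (by simpa using hr) (by simpa using hrs)
    exact ⟨t, by rw [completeHG, Finset.mem_powersetCard]; exact ⟨h2, h3⟩,
      h1 (Finset.mem_singleton_self x)⟩

lemma powersetCard_image {f : ℕ → ℕ} {S : Finset ℕ} (hf : Set.InjOn f ↑S) (r : ℕ) :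
    (S.image f).powersetCard r = (S.powersetCard r).image (Finset.image f) := by
  ext B
  rw [Finset.mem_powersetCard, Finset.mem_image]
  constructor
  · rintro ⟨hBsub, hBc⟩
    obtain ⟨A, hAS, hAB⟩ := Finset.subset_image_iff.1 hBsub
    refine ⟨A, ?_, hAB⟩
    rw [Finset.mem_powersetCard]
    refine ⟨hAS, ?_⟩
    rw [← hBc, ← hAB]
    exact Finset.card_image_of_injOn (hf.mono (by exact_mod_cast hAS)) |>.symm ▸ rfl
  · rintro ⟨A, hA, rfl⟩
    rw [Finset.mem_powersetCard] at hA
    exact ⟨Finset.image_subset_image hA.1,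
      by rw [Finset.card_image_of_injOn (hf.mono (by exact_mod_cast hA.1)), hA.2]⟩

lemma sup_powersetCard {T : Finset ℕ} {r : ℕ} (hr : 1 ≤ r) (hrT : r ≤ T.card) :
    (T.powersetCard r).sup id = T := by
  apply Finset.Subset.antisymm
  · intro x hx
    rw [Finset.mem_sup] at hx
    obtain ⟨e, he, hxe⟩ := hx
    exact (Finset.mem_powersetCard.1 he).1 hxe
  · intro x hx
    obtain ⟨t, h1, h2, h3⟩ := Finset.exists_subsuperset_card_eq
      (Finset.singleton_subset_iff.2 hx) (by simpa using hr) hrT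
    have ht : t ∈ T.powersetCard r := Finset.mem_powersetCard.2 ⟨h2, h3⟩
    have : (id t : Finset ℕ) ⊆ (T.powersetCard r).sup id := Finset.le_sup ht
    exact this (h1 (Finset.mem_singleton_self x))

end StmtAux

namespace StmtAux

def cliqueSetH (r s n : ℕ) (G : HG) : Finset (Finset ℕ) :=
  ((Finset.range n).powersetCard s).filter (fun T => T.powersetCard r ⊆ G)

lemma copy_char {r s n : ℕ} (hr : 1 ≤ r) (hrs : r ≤ s) {G : HG}
    (hG : hsupp G ⊆ Finset.range n) (K : HG) :
    (K ⊆ G ∧ IsCopy (completeHG r s) K) ↔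
      ∃ T ∈ cliqueSetH r s n G, K = T.powersetCard r := by
  constructor
  · rintro ⟨hKG, f, hinj, hemap⟩
    rw [hsupp_complete hr hrs] at hinj
    set T : Finset ℕ := (Finset.range s).image f with hT
    have hTc : T.card = s := by
      rw [hT, Finset.card_image_of_injOn hinj, Finset.card_range]
    have hK : K = T.powersetCard r := by
      rw [← hemap, hT, powersetCard_image hinj]
      rfl
    refine ⟨T, ?_, hK⟩
    rw [cliqueSetH, Finset.mem_filter, Finset.mem_powersetCard]
    have hsub : T.powersetCard r ⊆ G := by rw [← hK]; exact hKG
    refine ⟨⟨?_, hTc⟩, hsub⟩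
    intro x hx
    apply hG
    obtain ⟨t, h1, h2, h3⟩ := Finset.exists_subsuperset_card_eq
      (Finset.singleton_subset_iff.2 hx) (by simpa using hr) (by rw [hTc]; exact hrs)
    have : t ∈ T.powersetCard r := Finset.mem_powersetCard.2 ⟨h2, h3⟩
    rw [mem_hsupp]
    exact ⟨t, hsub this, h1 (Finset.mem_singleton_self x)⟩
  · rintro ⟨T, hT, rfl⟩
    rw [cliqueSetH, Finset.mem_filter, Finset.mem_powersetCard] at hT
    obtain ⟨⟨hTn, hTc⟩, hsub⟩ := hT
    refine ⟨hsub, ?_⟩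
    set f : ℕ → ℕ := fun x => if h : x < s then T.orderEmbOfFin hTc ⟨x, h⟩ else 0 with hf
    have hinj : Set.InjOn f ↑(Finset.range s) := by
      intro a ha b hb hab
      rw [Finset.coe_range, Set.mem_Iio] at ha hb
      rw [hf] at hab
      simp only [dif_pos ha, dif_pos hb] at hab
      have := (T.orderEmbOfFin hTc).injective hab
      exact congrArg Fin.val this
    have himg : (Finset.range s).image f = T := by
      apply Finset.eq_of_subset_of_card_le
      · intro y hy
        rw [Finset.mem_image] at hy
        obtain ⟨x, hx, rfl⟩ := hy
        rw [Finset.mem_range] at hx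
        rw [hf]
        simp only [dif_pos hx]
        exact Finset.orderEmbOfFin_mem _ _ _
      · rw [hTc, Finset.card_image_of_injOn hinj, Finset.card_range]
    refine ⟨f, ?_, ?_⟩
    · rw [hsupp_complete hr hrs]
      exact hinj
    · show (completeHG r s).image (Finset.image f) = T.powersetCard r
      rw [← himg, powersetCard_image hinj]
      rfl

lemma powersetCard_injOn {r s : ℕ} (hr : 1 ≤ r) (hrs : r ≤ s) :
    ∀ T1 : Finset ℕ, T1.card = s → ∀ T2 : Finset ℕ, T2.card = s →
      T1.powersetCard r = T2.powersetCard r → T1 = T2 := by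
  intro T1 h1 T2 h2 h
  have e1 : (T1.powersetCard r).sup id = T1 := sup_powersetCard hr (h1 ▸ hrs)
  have e2 : (T2.powersetCard r).sup id = T2 := sup_powersetCard hr (h2 ▸ hrs)
  rw [← e1, ← e2, h]

lemma copyCount_eq {r s n : ℕ} (hr : 1 ≤ r) (hrs : r ≤ s) {G : HG}
    (hG : hsupp G ⊆ Finset.range n) :
    copyCount (completeHG r s) G = (cliqueSetH r s n G).card := by
  have hset : {K : HG | K ⊆ G ∧ IsCopy (completeHG r s) K}
      = ↑((cliqueSetH r s n G).image (fun T => T.powersetCard r)) := by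
    ext K
    rw [Set.mem_setOf_eq, copy_char hr hrs hG]
    simp only [Finset.coe_image, Set.mem_image, Finset.mem_coe]
    constructor
    · rintro ⟨T, hT, rfl⟩; exact ⟨T, hT, rfl⟩
    · rintro ⟨T, hT, rfl⟩; exact ⟨T, hT, rfl⟩
  rw [copyCount, hset, Set.ncard_coe_finset]
  apply Finset.card_image_of_injOn
  intro T1 h1 T2 h2 h
  have c1 : T1.card = s := (Finset.mem_powersetCard.1 (Finset.mem_filter.1 h1).1).2
  have c2 : T2.card = s := (Finset.mem_powersetCard.1 (Finset.mem_filter.1 h2).1).2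
  exact powersetCard_injOn hr hrs T1 c1 T2 c2 h

end StmtAux

namespace StmtAux

/-- the covered-pairs relation of a hypergraph -/
def covA (G : HG) (u v : ℕ) : Prop := u ≠ v ∧ ∃ e ∈ G, u ∈ e ∧ v ∈ e

instance (G : HG) : DecidableRel (covA G) := fun u v => by
  unfold covA; infer_instance

lemma covA_symm (G : HG) : ∀ u v, covA G u v → covA G v u := by
  rintro u v ⟨h1, e, he, hu, hv⟩
  exact ⟨h1.symm, e, he, hv, hu⟩

/-- a family-free hypergraph has no (l+1) pairwise-covered vertices -/
lemma family_free_no_clique {r t : ℕ} (hr2 : 2 ≤ r) {G : HG} (hU : Uniform r G)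
    (hfree : ∀ F : HG, memFamilyK r t F → ¬ Contains G F) :
    ∀ S : Finset ℕ, S.card = t → ¬ (∀ u ∈ S, ∀ v ∈ S, u ≠ v → covA G u v) := by
  intro S hScard hpair
  classical
  set pick : Finset ℕ → Finset ℕ :=
    fun p => if h : ∃ e ∈ G, p ⊆ e then h.choose else ∅ with hpick
  have hpick_spec : ∀ p, (∃ e ∈ G, p ⊆ e) → pick p ∈ G ∧ p ⊆ pick p := by
    intro p h
    rw [hpick]
    simp only [dif_pos h]
    obtain ⟨he, hsub⟩ := h.choose_spec
    exact ⟨he, hsub⟩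
  have hex : ∀ p ∈ S.powersetCard 2, ∃ e ∈ G, p ⊆ e := by
    intro p hp
    rw [Finset.mem_powersetCard] at hp
    obtain ⟨u, v, huv, rfl⟩ := Finset.card_eq_two.1 hp.2
    obtain ⟨_, e, he, hu, hv⟩ := hpair u (hp.1 (by simp)) v (hp.1 (by simp)) huv
    exact ⟨e, he, by intro x hx; rcases Finset.mem_insert.1 hx with rfl | hx
                     · exact hu
                     · rw [Finset.mem_singleton.1 hx]; exact hv⟩
  set F : HG := (S.powersetCard 2).image pick with hF
  have hFG : F ⊆ G := by
    intro e he
    rw [hF, Finset.mem_image] at he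
    obtain ⟨p, hp, rfl⟩ := he
    exact (hpick_spec p (hex p hp)).1
  apply hfree F
  · refine ⟨fun e he => hU e (hFG he), ?_, S, hScard, ?_⟩
    · calc F.card ≤ (S.powersetCard 2).card := Finset.card_image_le
        _ = Nat.choose t 2 := by rw [Finset.card_powersetCard, hScard]
    · intro u hu v hv huv
      have hp : ({u, v} : Finset ℕ) ∈ S.powersetCard 2 := by
        rw [Finset.mem_powersetCard]
        constructor
        · intro x hx
          rcases Finset.mem_insert.1 hx with rfl | hx
          · exact hu
          · rw [Finset.mem_singleton.1 hx]; exact hv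
        · rw [Finset.card_insert_of_notMem (by simpa using huv), Finset.card_singleton]
      obtain ⟨hmem, hsub⟩ := hpick_spec _ (hex _ hp)
      refine ⟨pick {u, v}, ?_, hsub (by simp), hsub (by simp)⟩
      rw [hF, Finset.mem_image]
      exact ⟨{u, v}, hp, rfl⟩
  · refine ⟨F, hFG, id, ?_, ?_⟩
    · exact Function.Injective.injOn (fun a b h => h)
    · show F.image (Finset.image id) = F
      have : ∀ e : Finset ℕ, Finset.image id e = e := fun e => Finset.image_id
      calc F.image (Finset.image id) = F.image id := Finset.image_congr (fun e _ => this e)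
        _ = F := Finset.image_id

end StmtAux

namespace StmtAux

lemma turan_uniform (r n l : ℕ) : Uniform r (turanHG r n l) := by
  intro e he
  rw [turanHG, Finset.mem_filter, Finset.mem_powersetCard] at he
  exact he.1.2

lemma turan_supp (r n l : ℕ) : hsupp (turanHG r n l) ⊆ Finset.range n := by
  intro x hx
  rw [mem_hsupp] at hx
  obtain ⟨e, he, hxe⟩ := hx
  rw [turanHG, Finset.mem_filter, Finset.mem_powersetCard] at he
  exact he.1.1 hxe

lemma turan_family_free {r n l : ℕ} (hl : 1 ≤ l) :
    ∀ F : HG, memFamilyK r (l+1) F → ¬ Contains (turanHG r n l) F := by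
  rintro F ⟨hFU, hFc, S, hScard, hScov⟩ ⟨K, hKsub, f, hinj, hemap⟩
  have hShs : (S : Set ℕ) ⊆ ↑(hsupp F) := by
    intro u hu
    rw [Finset.mem_coe] at hu
    obtain ⟨v, hv, hvne⟩ := Finset.exists_mem_ne (s := S) (by omega : 1 < S.card) u
    obtain ⟨e, he, hue, _⟩ := hScov u hu v hv (Ne.symm hvne)
    rw [Finset.mem_coe, mem_hsupp]
    exact ⟨e, he, hue⟩
  have hinjS : Set.InjOn f ↑S := hinj.mono hShs
  set S' : Finset ℕ := S.image f with hS'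
  have hS'card : S'.card = l + 1 := by
    rw [hS', Finset.card_image_of_injOn hinjS, hScard]
  have hS'sub : S' ⊆ Finset.range n := by
    intro x hx
    rw [hS', Finset.mem_image] at hx
    obtain ⟨u, hu, rfl⟩ := hx
    obtain ⟨v, hv, hvne⟩ := Finset.exists_mem_ne (s := S) (by omega : 1 < S.card) u
    obtain ⟨e, he, hue, _⟩ := hScov u hu v hv (Ne.symm hvne)
    have hfe : e.image f ∈ K := by
      rw [← hemap, emap, Finset.mem_image]
      exact ⟨e, he, rfl⟩
    apply turan_supp r n l
    rw [mem_hsupp]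
    exact ⟨e.image f, hKsub hfe, Finset.mem_image_of_mem f hue⟩
  obtain ⟨x, hx, y, hy, hxy, hmod⟩ :=
    Finset.exists_ne_map_eq_of_card_lt_of_maps_to
      (s := S') (t := Finset.range l) (f := fun x => x % l)
      (by rw [hS'card, Finset.card_range]; omega)
      (fun x _ => Finset.mem_range.2 (Nat.mod_lt _ (by omega)))
  rw [hS', Finset.mem_image] at hx hy
  obtain ⟨u, hu, rfl⟩ := hx
  obtain ⟨v, hv, rfl⟩ := hy
  have huv : u ≠ v := fun h => hxy (by rw [h])
  obtain ⟨e, he, hue, hve⟩ := hScov u hu v hv huv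
  have hfe : e.image f ∈ turanHG r n l := by
    apply hKsub
    rw [← hemap, emap, Finset.mem_image]
    exact ⟨e, he, rfl⟩
  rw [turanHG, Finset.mem_filter] at hfe
  exact hxy (hfe.2 (f u) (Finset.mem_image_of_mem f hue)
    (f v) (Finset.mem_image_of_mem f hve) hmod)

lemma turan_cliqueSetH {r s n l : ℕ} (hr : 2 ≤ r) (hrs : r ≤ s) :
    cliqueSetH r s n (turanHG r n l)
      = ((Finset.range n).powersetCard s).filter
          (fun T => ∀ x ∈ T, ∀ y ∈ T, x % l = y % l → x = y) := by
  ext T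
  rw [cliqueSetH, Finset.mem_filter, Finset.mem_filter]
  constructor
  · rintro ⟨hT, hsub⟩
    refine ⟨hT, ?_⟩
    rw [Finset.mem_powersetCard] at hT
    intro x hx y hy hmod
    by_contra hne
    have hp : ({x, y} : Finset ℕ) ⊆ T := by
      intro z hz
      rcases Finset.mem_insert.1 hz with rfl | hz
      · exact hx
      · rw [Finset.mem_singleton.1 hz]; exact hy
    have hpc : ({x, y} : Finset ℕ).card = 2 := by
      rw [Finset.card_insert_of_notMem (by simpa using hne), Finset.card_singleton]
    obtain ⟨e, h1, h2, h3⟩ := Finset.exists_subsuperset_card_eq (n := r) hp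
      (by rw [hpc]; exact hr) (by rw [hT.2]; exact hrs)
    have he : e ∈ turanHG r n l := hsub (Finset.mem_powersetCard.2 ⟨h2, h3⟩)
    rw [turanHG, Finset.mem_filter] at he
    exact hne (he.2 x (h1 (by simp)) y (h1 (by simp)) hmod)
  · rintro ⟨hT, hrb⟩
    refine ⟨hT, ?_⟩
    rw [Finset.mem_powersetCard] at hT
    intro e he
    rw [Finset.mem_powersetCard] at he
    rw [turanHG, Finset.mem_filter, Finset.mem_powersetCard]
    exact ⟨⟨he.1.trans hT.1, he.2⟩,
      fun i hi j hj hmod => hrb i (he.1 hi) j (he.1 hj) hmod⟩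

lemma turan_count {r s n l : ℕ} (hr : 2 ≤ r) (hrs : r ≤ s) (hl : 1 ≤ l) :
    copyCount (completeHG r s) (turanHG r n l) = tf s n l := by
  rw [copyCount_eq (by omega) hrs (turan_supp r n l), turan_cliqueSetH hr hrs]
  have := rainbow_count (fun x => x % l) (Finset.range l) (Finset.range n)
    (fun x _ => Finset.mem_range.2 (Nat.mod_lt _ (by omega))) s
  rw [this, fibers_eq_balParts n l (by omega)]
  rfl

/-- upper bound for admissible hypergraphs -/
lemma upper_bound {r s l n : ℕ} (hr : 2 ≤ r) (hrs : r ≤ s) {G : HG}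
    (hU : Uniform r G) (hsub : hsupp G ⊆ Finset.range n)
    (hfree : ∀ F : HG, memFamilyK r (l+1) F → ¬ Contains G F) :
    copyCount (completeHG r s) G ≤ tf s n l := by
  rw [copyCount_eq (by omega) hrs hsub]
  have hsubA : cliqueSetH r s n G ⊆ cliqueSetA (covA G) s (Finset.range n) := by
    intro T hT
    rw [cliqueSetH, Finset.mem_filter] at hT
    obtain ⟨hT1, hT2⟩ := hT
    rw [cliqueSetA, Finset.mem_filter]
    refine ⟨hT1, ?_⟩
    rw [Finset.mem_powersetCard] at hT1
    intro u hu v hv huv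
    have hp : ({u, v} : Finset ℕ) ⊆ T := by
      intro z hz
      rcases Finset.mem_insert.1 hz with rfl | hz
      · exact hu
      · rw [Finset.mem_singleton.1 hz]; exact hv
    have hpc : ({u, v} : Finset ℕ).card = 2 := by
      rw [Finset.card_insert_of_notMem (by simpa using huv), Finset.card_singleton]
    obtain ⟨e, h1, h2, h3⟩ := Finset.exists_subsuperset_card_eq (n := r) hp
      (by rw [hpc]; exact hr) (by rw [hT1.2]; exact hrs)
    exact ⟨huv, e, hT2 (Finset.mem_powersetCard.2 ⟨h2, h3⟩),
      h1 (by simp), h1 (by simp)⟩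
  calc (cliqueSetH r s n G).card
      ≤ (cliqueSetA (covA G) s (Finset.range n)).card := Finset.card_le_card hsubA
    _ ≤ tf s (Finset.range n).card l := by
        apply zykov (covA G) (covA_symm G) l (Finset.range n) ?_ s
        intro S _ hScard hpair
        exact family_free_no_clique hr hU hfree S hScard hpair
    _ = tf s n l := by rw [Finset.card_range]

end StmtAux

/-- For `l ≥ s ≥ r ≥ 3` and sufficiently large `n`, the maximum number of
copies of `K_s^{(r)}` in an `n`-vertex `r`-graph containing no member of the family
`𝒦_{l+1}^r` equals `N(K_s^{(r)}, T_r(n, l))`. -/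
theorem stmt3 (r s l : ℕ) (hr : 3 ≤ r) (hrs : r ≤ s) (hsl : s ≤ l) :
    ∃ N : ℕ, ∀ n : ℕ, N ≤ n →
      exCountFam r n (completeHG r s) (memFamilyK r (l+1)) =
        copyCount (completeHG r s) (turanHG r n l) := by
  refine ⟨0, fun n _ => ?_⟩
  have hr2 : 2 ≤ r := by omega
  have hl1 : 1 ≤ l := by omega
  have htc := StmtAux.turan_count (r := r) (s := s) (n := n) (l := l) hr2 hrs hl1
  apply IsGreatest.csSup_eq
  constructor
  · exact ⟨turanHG r n l, StmtAux.turan_uniform r n l, StmtAux.turan_supp r n l,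
      StmtAux.turan_family_free hl1, rfl⟩
  · rintro m ⟨G, hU, hsub, hfree, rfl⟩
    rw [htc]
    exact StmtAux.upper_bound hr2 hrs hU hsub hfree
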